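/- Let ψ, φ : ℝⁿ → [0, ∞) be ℤⁿ-periodic Lipschitz functions such that {ψ = 0} ⊆ {φ = 0}. Then there exists a Lipschitz continuous function θ : [0, ∞) → [0, ∞) with θ(0) = 0, θ(s) > 0 for every s > 0, and θ'(s) > 0 for almost every s > 0, such that θ(φ(x)) ≤ ψ(x) for all x ∈ ℝⁿ. -/

import Mathlib

open MeasureTheory Filter
open scoped ENNReal NNReal RealInnerProductSpace

noncomputable section

/-- Euclidean space `ℝⁿ`. -/
abbrev Eucl (n : ℕ) := EuclideanSpace ℝ (Fin n)

/-- The point of `ℝⁿ` with integer coordinates `k`. -/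
def intVec {n : ℕ} (k : Fin n → ℤ) : Eucl n := WithLp.toLp 2 (fun i => (k i : ℝ))

/-- `ℤⁿ`-periodicity. -/
def IsZPeriodic {n : ℕ} {α : Type*} (u : Eucl n → α) : Prop :=
  ∀ (x : Eucl n) (k : Fin n → ℤ), u (x + intVec k) = u x

/-- Lipschitz ordering lemma. If `ψ, φ ≥ 0` are `ℤⁿ`-periodic Lipschitz
functions with `{ψ = 0} ⊆ {φ = 0}`, then there is a Lipschitz `θ : [0,∞) → [0,∞)` with
`θ(0) = 0`, `θ > 0` on `(0,∞)`, `θ' > 0` a.e., and `θ ∘ φ ≤ ψ`. -/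
theorem lipschitz_ordering {n : ℕ} (ψ φ : Eucl n → ℝ) (Kψ Kφ : ℝ≥0)
    (hψl : LipschitzWith Kψ ψ) (hφl : LipschitzWith Kφ φ)
    (hψ0 : ∀ x, 0 ≤ ψ x) (hφ0 : ∀ x, 0 ≤ φ x)
    (hψp : IsZPeriodic ψ) (hφp : IsZPeriodic φ)
    (hsub : {x | ψ x = 0} ⊆ {x | φ x = 0}) :
    ∃ (θ : ℝ → ℝ) (K : ℝ≥0), LipschitzOnWith K θ (Set.Ici 0) ∧
      θ 0 = 0 ∧ (∀ s : ℝ, 0 < s → 0 < θ s) ∧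
      (∀ᵐ s ∂(volume.restrict (Set.Ioi (0 : ℝ))), 0 < derivWithin θ (Set.Ici 0) s) ∧
      ∀ x, θ (φ x) ≤ ψ x := by
  classical
  -- the unit cube
  set C : Set (Eucl n) :=
    (EuclideanSpace.equiv (Fin n) ℝ).toHomeomorph ⁻¹' (Set.univ.pi fun _ => Set.Icc (0:ℝ) 1)
    with hCdef
  have hCmem : ∀ x : Eucl n, x ∈ C ↔ ∀ i, x i ∈ Set.Icc (0:ℝ) 1 := by
    intro x
    simp only [hCdef, Set.mem_preimage, Set.mem_univ_pi]
    exact Iff.rfl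
  have hCcomp : IsCompact C :=
    (Homeomorph.isCompact_preimage _).2 (isCompact_univ_pi fun _ => isCompact_Icc)
  have hφc : Continuous φ := hφl.continuous
  have hψc : Continuous ψ := hψl.continuous
  -- the sublevel sets
  set A : ℝ → Set (Eucl n) := fun s => {x | s ≤ φ x} ∩ C with hAdef
  have hAcomp : ∀ s, IsCompact (A s) :=
    fun s => hCcomp.inter_left (isClosed_le continuous_const hφc)
  have hAmono : ∀ {s t : ℝ}, s ≤ t → A t ⊆ A s := by
    intro s t hst x hx
    exact ⟨le_trans hst hx.1, hx.2⟩
  have hbdd : ∀ s, BddBelow (ψ '' A s) := by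
    intro s
    exact ⟨0, by rintro _ ⟨y, _, rfl⟩; exact hψ0 y⟩
  -- the capped infimum function
  set f : ℝ → ℝ := fun s => if (A s).Nonempty then min 1 (sInf (ψ '' A s)) else 1 with hfdef
  have hf_le_one : ∀ s, f s ≤ 1 := by
    intro s
    by_cases h : (A s).Nonempty <;> simp [hfdef, h]
  have hf_nonneg : ∀ s, 0 ≤ f s := by
    intro s
    by_cases h : (A s).Nonempty
    · simp only [hfdef, h, if_true]
      exact le_min one_pos.le (le_csInf (h.image ψ) (by rintro _ ⟨y, _, rfl⟩; exact hψ0 y))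
    · simp [hfdef, h]
  have hf_mono : Monotone f := by
    intro s t hst
    by_cases ht : (A t).Nonempty
    · have hs : (A s).Nonempty := ht.mono (hAmono hst)
      simp only [hfdef, hs, ht, if_true]
      exact min_le_min le_rfl
        (csInf_le_csInf (hbdd s) (ht.image ψ) (Set.image_mono (f := ψ) (hAmono hst)))
    · simp only [hfdef, ht, if_false]
      exact hf_le_one s
  have hf_pos : ∀ s : ℝ, 0 < s → 0 < f s := by
    intro s hs
    by_cases h : (A s).Nonempty
    · simp only [hfdef, h, if_true]
      obtain ⟨x₀, hx₀, hmin⟩ := (hAcomp s).exists_isMinOn h hψc.continuousOn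
      have hψx₀ : 0 < ψ x₀ := by
        rcases lt_or_eq_of_le (hψ0 x₀) with h' | h'
        · exact h'
        · exfalso
          have h1 : φ x₀ = 0 := hsub h'.symm
          have h2 : s ≤ φ x₀ := hx₀.1
          linarith
      refine lt_min one_pos (lt_of_lt_of_le hψx₀ ?_)
      exact le_csInf (h.image ψ) (by rintro _ ⟨y, hy, rfl⟩; exact hmin hy)
    · simp [hfdef, h]
  have hf_meas : Measurable f := hf_mono.measurable
  -- the integrand
  set g : ℝ → ℝ := fun t => f t * Real.exp (-t) with hgdef
  have hg_nonneg : ∀ t, 0 ≤ g t := fun t => mul_nonneg (hf_nonneg t) (Real.exp_pos _).le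
  have hg_meas : Measurable g := hf_meas.mul (Real.continuous_exp.comp continuous_neg).measurable
  have hexp_int : ∀ a b : ℝ, IntervalIntegrable (fun t => Real.exp (-t)) volume a b :=
    fun a b => (Real.continuous_exp.comp continuous_neg).intervalIntegrable a b
  have hg_int : ∀ a b : ℝ, IntervalIntegrable g volume a b := by
    intro a b
    refine (hexp_int a b).mono_fun' hg_meas.aestronglyMeasurable.restrict
      (Eventually.of_forall fun t => ?_)
    simp only [Real.norm_eq_abs, abs_of_nonneg (hg_nonneg t)]
    calc f t * Real.exp (-t) ≤ 1 * Real.exp (-t) :=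
          mul_le_mul_of_nonneg_right (hf_le_one t) (Real.exp_pos _).le
      _ = Real.exp (-t) := one_mul _
  have hg_le_one : ∀ t : ℝ, 0 ≤ t → g t ≤ 1 := by
    intro t ht
    calc g t ≤ 1 * Real.exp (-t) :=
          mul_le_mul_of_nonneg_right (hf_le_one t) (Real.exp_pos _).le
      _ ≤ 1 := by rw [one_mul]; exact Real.exp_le_one_iff.2 (neg_nonpos.2 ht)
  -- the function θ
  set θ : ℝ → ℝ := fun s => ∫ t in (0:ℝ)..s, g t with hθdef
  refine ⟨θ, 1, ?_, ?_, ?_, ?_, ?_⟩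
  · -- Lipschitz
    refine LipschitzOnWith.of_dist_le_mul fun s hs t ht => ?_
    have : θ s - θ t = ∫ u in t..s, g u :=
      intervalIntegral.integral_interval_sub_left (hg_int 0 s) (hg_int 0 t)
    rw [Real.dist_eq, Real.dist_eq, this]
    have := intervalIntegral.norm_integral_le_of_norm_le_const (C := 1) (a := t) (b := s)
      (f := g) (fun u hu => by
        rw [Real.norm_eq_abs, abs_of_nonneg (hg_nonneg u)]
        refine hg_le_one u ?_
        rcases hu with hu
        have := hu.1
        rcases le_total t s with h' | h'
        · rw [Set.uIoc_of_le h'] at hu; exact le_of_lt (lt_of_le_of_lt ht hu.1)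
        · rw [Set.uIoc_of_ge h'] at hu; exact le_of_lt (lt_of_le_of_lt hs hu.1))
    rw [Real.norm_eq_abs] at this
    simpa [NNReal.coe_one, one_mul, abs_sub_comm] using this
  · simp [hθdef]
  · -- positivity of θ
    intro s hs
    have h1 : θ s = (∫ t in (0:ℝ)..(s/2), g t) + ∫ t in (s/2)..s, g t :=
      (intervalIntegral.integral_add_adjacent_intervals (hg_int 0 (s/2)) (hg_int (s/2) s)).symm
    have h2 : 0 ≤ ∫ t in (0:ℝ)..(s/2), g t :=
      intervalIntegral.integral_nonneg (by linarith) (fun u _ => hg_nonneg u)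
    set c : ℝ := f (s/2) * Real.exp (-s) with hcdef
    have hc : 0 < c := mul_pos (hf_pos _ (by linarith)) (Real.exp_pos _)
    have h3 : (∫ t in (s/2)..s, (c : ℝ)) ≤ ∫ t in (s/2)..s, g t := by
      refine intervalIntegral.integral_mono_on (by linarith)
        (intervalIntegrable_const) (hg_int _ _) (fun u hu => ?_)
      exact mul_le_mul (hf_mono hu.1) (Real.exp_le_exp.2 (by linarith [hu.2]))
        (Real.exp_pos _).le (hf_nonneg _)
    rw [intervalIntegral.integral_const, smul_eq_mul] at h3
    have : 0 < (s - s/2) * c := mul_pos (by linarith) hc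
    rw [h1]
    nlinarith
  · -- a.e. positivity of derivative
    have hD : Set.Countable {s : ℝ | ¬ ContinuousAt f s} := hf_mono.countable_not_continuousAt
    have hD0 : volume {s : ℝ | ¬ ContinuousAt f s} = 0 := hD.measure_zero _
    have hae : ∀ᵐ s ∂volume, ContinuousAt f s := by
      rw [ae_iff]
      simpa using hD0
    rw [ae_restrict_iff' measurableSet_Ioi]
    filter_upwards [hae] with s hcont hs
    have hgc : ContinuousAt g s :=
      hcont.mul ((Real.continuous_exp.comp continuous_neg).continuousAt)
    have hd : HasDerivAt θ (g s) s :=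
      intervalIntegral.integral_hasDerivAt_right (hg_int 0 s)
        hg_meas.stronglyMeasurable.stronglyMeasurableAtFilter hgc
    have : derivWithin θ (Set.Ici 0) s = g s :=
      hd.hasDerivWithinAt.derivWithin ((uniqueDiffOn_Ici 0) s (Set.mem_Ici.2 (le_of_lt (Set.mem_Ioi.1 hs))))
    rw [this]
    exact mul_pos (hf_pos s hs) (Real.exp_pos _)
  · -- the main inequality
    intro x
    rcases eq_or_lt_of_le (hφ0 x) with h0 | h0
    · rw [← h0]; simpa [hθdef] using hψ0 x
    · set s : ℝ := φ x with hsdef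
      set k : Fin n → ℤ := fun i => ⌊x i⌋ with hkdef
      set y : Eucl n := x - intVec k with hydef
      have hyx : y + intVec k = x := by rw [hydef]; abel
      have hψy : ψ y = ψ x := by rw [← hyx, hψp]
      have hφy : φ y = φ x := by rw [← hyx, hφp]
      have hyC : y ∈ C := by
        rw [hCmem]
        intro i
        have hyi : y i = x i - (⌊x i⌋ : ℝ) := by simp [y, intVec, k]
        rw [hyi]
        have h1 := Int.floor_le (x i)
        have h2 := Int.lt_floor_add_one (x i)
        constructor <;> [linarith; linarith]
      have hyA : y ∈ A s := ⟨by simp [hAdef, hφy, hsdef], hyC⟩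
      have hne : (A s).Nonempty := ⟨y, hyA⟩
      have hfs : f s ≤ ψ x := by
        simp only [hfdef, hne, if_true]
        calc min 1 (sInf (ψ '' A s)) ≤ sInf (ψ '' A s) := min_le_right _ _
          _ ≤ ψ y := csInf_le (hbdd s) ⟨y, hyA, rfl⟩
          _ = ψ x := hψy
      have hθs : θ s ≤ f s := by
        have h1 : θ s ≤ ∫ t in (0:ℝ)..s, f s * Real.exp (-t) := by
          refine intervalIntegral.integral_mono_on h0.le (hg_int 0 s)
            ((hexp_int 0 s).const_mul _) (fun u hu => ?_)
          exact mul_le_mul_of_nonneg_right (hf_mono hu.2) (Real.exp_pos _).le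
        have h2 : (∫ t in (0:ℝ)..s, f s * Real.exp (-t)) = f s * ∫ t in (0:ℝ)..s, Real.exp (-t) :=
          intervalIntegral.integral_const_mul _ _
        have h3 : (∫ t in (0:ℝ)..s, Real.exp (-t)) = 1 - Real.exp (-s) := by
          have : (∫ t in (0:ℝ)..s, Real.exp (-t)) = ∫ t in (-s)..(-0:ℝ), Real.exp t :=
            intervalIntegral.integral_comp_neg Real.exp
          rw [this, integral_exp]
          simp
        rw [h2, h3] at h1
        calc θ s ≤ f s * (1 - Real.exp (-s)) := h1
          _ ≤ f s * 1 := mul_le_mul_of_nonneg_left (by linarith [(Real.exp_pos (-s)).le])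
              (hf_nonneg s)
          _ = f s := mul_one _
      exact le_trans hθs hfs
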